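/- arXiv:1208.5375 — 2 statements merged into one kernel-verified Lean document; each statement's English description precedes it below -/
import Mathlib

section
/- If {A_h} is an asymptotic spectral measure and {Q_h} the corresponding positive asymptotic morphism, then the asymptotic spectrum spec({A_h}) equals the asymptotic support supp({Q_h}). -/
open Filter Topology Set

noncomputable section

/-- A positive operator-valued measure on a measurable space `X`,
taking values in the bounded operators on a Hilbert space `H`. -/
structure POVM (X H : Type*) [MeasurableSpace X]
    [NormedAddCommGroup H] [InnerProductSpace ℂ H] [CompleteSpace H] where
  toFun : Set X → H →L[ℂ] H
  empty' : toFun ∅ = 0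
  pos' : ∀ s : Set X, MeasurableSet s → (toFun s).IsPositive
  additive' : ∀ Δ : ℕ → Set X, (∀ n, MeasurableSet (Δ n)) →
    Pairwise (Function.onFun Disjoint Δ) → ∀ x y : H,
      Tendsto (fun n => ∑ i ∈ Finset.range n, (inner ℂ (toFun (Δ i) x) y : ℂ))
        atTop (𝓝 (inner ℂ (toFun (⋃ i, Δ i) x) y))

variable {X H : Type*} [TopologicalSpace X] [MeasurableSpace X]
  [NormedAddCommGroup H] [InnerProductSpace ℂ H] [CompleteSpace H]

/-- The cospectrum of a positive operator-valued measure. -/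
def POVM.cospec (A : POVM X H) : Set X := ⋃₀ {U : Set X | IsOpen U ∧ A.toFun U = 0}

/-- The spectrum of a positive operator-valued measure. -/
def POVM.spec (A : POVM X H) : Set X := (A.cospec)ᶜ

/-- Regularity: the measure of any set is norm-approximated from inside by compacts. -/
def POVM.Regular (A : POVM X H) : Prop := ∀ s : Set X, MeasurableSet s → ∀ ε > 0,
  ∃ K : Set X, IsCompact K ∧ K ⊆ s ∧ ‖A.toFun s - A.toFun K‖ < ε

/-- Restriction `b ↦ A (a ∩ b)` of a positive operator-valued measure. -/
def POVM.restrict (A : POVM X H) (a : Set X) (ha : MeasurableSet a) : POVM X H where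
  toFun b := A.toFun (a ∩ b)
  empty' := by simpa using A.empty'
  pos' s hs := A.pos' _ (ha.inter hs)
  additive' Δ hΔ hd x y := by
    have h1 : (⋃ i, a ∩ Δ i) = a ∩ ⋃ i, Δ i := (Set.inter_iUnion a Δ).symm
    have := A.additive' (fun i => a ∩ Δ i) (fun i => ha.inter (hΔ i))
      (fun i j hij => Disjoint.mono inter_subset_right inter_subset_right (hd hij)) x y
    rwa [h1] at this

/-- An asymptotic spectral measure: a family of positive operator-valued measures
parameterized by `h ∈ (0,1]`, with `limsup‖A_h(X)‖ ≤ 1`, continuity in `h`, and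
asymptotic multiplicativity. -/
def ASM (A : ℝ → POVM X H) : Prop :=
  (limsup (fun h => ‖(A h).toFun univ‖) (𝓝[>] (0:ℝ)) ≤ 1) ∧
  (∀ s : Set X, IsOpen s → IsCompact (closure s) →
    ContinuousOn (fun h => (A h).toFun s) (Ioc (0:ℝ) 1)) ∧
  (∀ s t : Set X, MeasurableSet s → MeasurableSet t →
    Tendsto (fun h => ‖(A h).toFun (s ∩ t) - (A h).toFun s * (A h).toFun t‖)
      (𝓝[>] (0:ℝ)) (𝓝 0))

/-- The cospectrum of an asymptotic spectral measure. -/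
def cospecFam (A : ℝ → POVM X H) : Set X :=
  ⋃₀ {U : Set X | IsOpen U ∧ Tendsto (fun h => ‖(A h).toFun U‖) (𝓝[>] (0:ℝ)) (𝓝 0)}

/-- The spectrum of an asymptotic spectral measure. -/
def specFam (A : ℝ → POVM X H) : Set X := (cospecFam A)ᶜ

/-- Asymptotic equivalence of two asymptotic spectral measures. -/
def ASMEquiv (A B : ℝ → POVM X H) : Prop :=
  ∀ s : Set X, MeasurableSet s →
    Tendsto (fun h => ‖(A h).toFun s - (B h).toFun s‖) (𝓝[>] (0:ℝ)) (𝓝 0)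

/-- An asymptotic spectral measure has compact support if all the spectra `spec(A_h)`
are contained in one compact set. -/
def HasCompactSupportASM (A : ℝ → POVM X H) : Prop :=
  ∃ K : Set X, IsCompact K ∧ ∀ h ∈ Ioc (0:ℝ) 1, (A h).spec ⊆ K

/-- Simple functions: finite linear combinations of characteristic functions of
pre-compact open sets. -/
def S0 (X : Type*) [TopologicalSpace X] : Set (X → ℂ) :=
  {f | ∃ (n : ℕ) (c : Fin n → ℂ) (U : Fin n → Set X),
    (∀ i, IsOpen (U i) ∧ IsCompact (closure (U i))) ∧
    f = fun x => ∑ i, c i * (U i).indicator (fun _ => (1:ℂ)) x}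

/-- `B_0(X)`: the C*-algebra generated by characteristic functions of pre-compact
open sets, realized as uniform limits of the simple functions in `S0 X`. -/
def B0 (X : Type*) [TopologicalSpace X] : Set (X → ℂ) :=
  {f | ∃ g : ℕ → X → ℂ, (∀ n, g n ∈ S0 X) ∧ TendstoUniformly g f atTop}

/-- Bounded Borel functions. -/
def Bb (X : Type*) [MeasurableSpace X] : Set (X → ℂ) :=
  {f | Measurable f ∧ ∃ C : ℝ, ∀ x, ‖f x‖ ≤ C}

/-- A pointwise nonnegative (real-valued) function. -/
def NonnegFun {X : Type*} (f : X → ℂ) : Prop := ∀ x, 0 ≤ (f x).re ∧ (f x).im = 0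

/-- A positive asymptotic morphism on `B_0(X)`. -/
def PAM (Q : ℝ → (X → ℂ) →ₗ[ℂ] (H →L[ℂ] H)) : Prop :=
  (∀ h ∈ Ioc (0:ℝ) 1, ∀ f : X → ℂ, NonnegFun f → (Q h f).IsPositive) ∧
  (∀ f ∈ B0 X, ContinuousOn (fun h => Q h f) (Ioc (0:ℝ) 1)) ∧
  (∀ f ∈ B0 X, ∀ g ∈ B0 X,
    Tendsto (fun h => ‖Q h (f * g) - Q h f * Q h g‖) (𝓝[>] (0:ℝ)) (𝓝 0))

/-- A positive asymptotic morphism on the bounded Borel functions `B_b(X)`. -/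
def PAMBb (Q : ℝ → (X → ℂ) →ₗ[ℂ] (H →L[ℂ] H)) : Prop :=
  (∀ h ∈ Ioc (0:ℝ) 1, ∀ f : X → ℂ, NonnegFun f → (Q h f).IsPositive) ∧
  (∀ f ∈ Bb X, ContinuousOn (fun h => Q h f) (Ioc (0:ℝ) 1)) ∧
  (∀ f ∈ Bb X, ∀ g ∈ Bb X,
    Tendsto (fun h => ‖Q h (f * g) - Q h f * Q h g‖) (𝓝[>] (0:ℝ)) (𝓝 0))

/-- Support of a single positive morphism on `B_0(X)`. -/
def suppMor (Q : (X → ℂ) →ₗ[ℂ] (H →L[ℂ] H)) : Set X :=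
  ⋂₀ {F : Set X | IsClosed F ∧ ∀ f ∈ B0 X, tsupport f ⊆ Fᶜ → Q f = 0}

/-- Support of a single positive morphism, via its restriction to `C_0(X)`. -/
def suppMorC0 (Q : (X → ℂ) →ₗ[ℂ] (H →L[ℂ] H)) : Set X :=
  ⋂₀ {F : Set X | IsClosed F ∧ ∀ f : X → ℂ, Continuous f →
    Tendsto f (cocompact X) (𝓝 0) → tsupport f ⊆ Fᶜ → Q f = 0}

/-- Support of a positive asymptotic morphism on `B_0(X)`. -/
def suppPAM (Q : ℝ → (X → ℂ) →ₗ[ℂ] (H →L[ℂ] H)) : Set X :=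
  ⋂₀ {F : Set X | IsClosed F ∧ ∀ f ∈ B0 X, tsupport f ⊆ Fᶜ →
    Tendsto (fun h => ‖Q h f‖) (𝓝[>] (0:ℝ)) (𝓝 0)}

/-- Support of a positive asymptotic morphism on `B_b(X)`. -/
def suppPAMBb (Q : ℝ → (X → ℂ) →ₗ[ℂ] (H →L[ℂ] H)) : Set X :=
  ⋂₀ {F : Set X | IsClosed F ∧ ∀ f ∈ Bb X, tsupport f ⊆ Fᶜ →
    Tendsto (fun h => ‖Q h f‖) (𝓝[>] (0:ℝ)) (𝓝 0)}

/-- The Riesz correspondence `Q_h(f) = ∫ f dA_h`, expressed on characteristic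
functions: `Q_h(χ_Δ) = A_h(Δ)`. -/
def Corr (A : ℝ → POVM X H) (Q : ℝ → (X → ℂ) →ₗ[ℂ] (H →L[ℂ] H)) : Prop :=
  ∀ h ∈ Ioc (0:ℝ) 1, ∀ s : Set X, MeasurableSet s →
    Q h (s.indicator (fun _ => (1:ℂ))) = (A h).toFun s

/-- Uniform boundedness of a family of morphisms w.r.t. the sup norm. -/
def UnifBdd (Q : ℝ → (X → ℂ) →ₗ[ℂ] (H →L[ℂ] H)) : Prop :=
  ∃ C : ℝ, ∀ h ∈ Ioc (0:ℝ) 1, ∀ f : X → ℂ, ∀ M : ℝ,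
    (∀ x, ‖f x‖ ≤ M) → ‖Q h f‖ ≤ C * M

/-- `Ioc 0 1` is a neighborhood of `0` within `Ioi 0`. -/
lemma aux_Ioc_mem : Ioc (0:ℝ) 1 ∈ 𝓝[>] (0:ℝ) :=
  Ioc_mem_nhdsGT_of_mem (by constructor <;> norm_num)

/-- Any `f ∈ B0 X` is bounded. -/
lemma aux_B0_bounded {f : X → ℂ} (hf : f ∈ B0 X) : ∃ M : ℝ, 0 ≤ M ∧ ∀ x, ‖f x‖ ≤ M := by
  obtain ⟨g, hg, hgu⟩ := hf
  rw [Metric.tendstoUniformly_iff] at hgu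
  obtain ⟨n, hn⟩ := (hgu 1 one_pos).exists
  obtain ⟨m, c, U, -, hgn⟩ := hg n
  refine ⟨(∑ i, ‖c i‖) + 1, by positivity, fun x => ?_⟩
  have h1 : ‖g n x‖ ≤ ∑ i, ‖c i‖ := by
    rw [hgn]
    refine (norm_sum_le _ _).trans (Finset.sum_le_sum fun i _ => ?_)
    rw [norm_mul]
    rcases Set.indicator_eq_zero_or_self (U i) (fun _ => (1:ℂ)) x with h | h <;>
      simp [h, norm_indicator_eq_indicator_norm]
  have h2 : ‖f x - g n x‖ < 1 := by
    have := hn x; rwa [dist_eq_norm] at this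
  calc ‖f x‖ = ‖g n x + (f x - g n x)‖ := by ring_nf
    _ ≤ ‖g n x‖ + ‖f x - g n x‖ := norm_add_le _ _
    _ ≤ (∑ i, ‖c i‖) + 1 := add_le_add h1 h2.le

/-- Positivity + domination gives a norm bound for `Q h`. -/
lemma aux_norm_le {Q : ℝ → (X → ℂ) →ₗ[ℂ] (H →L[ℂ] H)}
    (hQpos : ∀ h ∈ Ioc (0:ℝ) 1, ∀ f : X → ℂ, NonnegFun f → (Q h f).IsPositive)
    {h : ℝ} (hh : h ∈ Ioc (0:ℝ) 1) {w g : X → ℂ}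
    (hw : NonnegFun w) (hgw : NonnegFun (g - w)) : ‖Q h w‖ ≤ ‖Q h g‖ := by
  have h1 : (0 : H →L[ℂ] H) ≤ Q h w :=
    (ContinuousLinearMap.nonneg_iff_isPositive _).2 (hQpos h hh w hw)
  have h2 : Q h w ≤ Q h g := by
    rw [ContinuousLinearMap.le_def, ← map_sub]
    exact hQpos h hh _ hgw
  exact CStarAlgebra.norm_le_norm_of_nonneg_of_le h1 h2

/-- The hard direction: if `‖A_h(U)‖ → 0` for an open `U`, then `‖Q_h(f)‖ → 0` for all
`f ∈ B0 X` supported in `U`. -/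
lemma aux_key [BorelSpace X]
    (A : ℝ → POVM X H) (Q : ℝ → (X → ℂ) →ₗ[ℂ] (H →L[ℂ] H))
    (hQ : PAM Q) (hcorr : Corr A Q) {U : Set X} (hU : IsOpen U)
    (hlim : Tendsto (fun h => ‖(A h).toFun U‖) (𝓝[>] (0:ℝ)) (𝓝 0))
    {f : X → ℂ} (hf : f ∈ B0 X) (hsupp : tsupport f ⊆ U) :
    Tendsto (fun h => ‖Q h f‖) (𝓝[>] (0:ℝ)) (𝓝 0) := by
  obtain ⟨M, hM0, hM⟩ := aux_B0_bounded hf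
  have hfz : ∀ x ∉ U, f x = 0 := fun x hx =>
    image_eq_zero_of_notMem_tsupport (fun hmem => hx (hsupp hmem))
  set χ : X → ℂ := U.indicator (fun _ => (1:ℂ)) with hχ
  set g : X → ℂ := fun x => (M:ℂ) * χ x with hg
  have hgsmul : g = (M:ℂ) • χ := rfl
  -- the four nonneg pieces of f
  set u₁ : X → ℂ := fun x => ((max (f x).re 0 : ℝ) : ℂ) with hu₁
  set u₂ : X → ℂ := fun x => ((max (-(f x).re) 0 : ℝ) : ℂ) with hu₂
  set v₁ : X → ℂ := fun x => ((max (f x).im 0 : ℝ) : ℂ) with hv₁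
  set v₂ : X → ℂ := fun x => ((max (-(f x).im) 0 : ℝ) : ℂ) with hv₂
  have hdecomp : f = u₁ - u₂ + Complex.I • (v₁ - v₂) := by
    funext x
    have : f x = ((f x).re : ℂ) + ((f x).im : ℂ) * Complex.I := (Complex.re_add_im (f x)).symm
    rw [this]
    simp only [Pi.add_apply, Pi.sub_apply, Pi.smul_apply, hu₁, hu₂, hv₁, hv₂, smul_eq_mul]
    push_cast
    have h1 : (max (f x).re 0 : ℝ) - max (-(f x).re) 0 = (f x).re := by
      rcases le_total (f x).re 0 with h | h <;> simp [max_eq_left, max_eq_right, h] <;> linarith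
    have h2 : (max (f x).im 0 : ℝ) - max (-(f x).im) 0 = (f x).im := by
      rcases le_total (f x).im 0 with h | h <;> simp [max_eq_left, max_eq_right, h] <;> linarith
    ring_nf
    have h1' : ((max (f x).re 0 : ℝ) : ℂ) - ((max (-(f x).re) 0 : ℝ) : ℂ) = (f x).re := by
      rw [← Complex.ofReal_sub, h1]
    have h2' : ((max (f x).im 0 : ℝ) : ℂ) - ((max (-(f x).im) 0 : ℝ) : ℂ) = (f x).im := by
      rw [← Complex.ofReal_sub, h2]
    linear_combination -h1' - Complex.I * h2'
  -- each piece is nonneg and dominated by g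
  have hpieces : ∀ w ∈ ({u₁, u₂, v₁, v₂} : Set (X → ℂ)),
      NonnegFun w ∧ NonnegFun (g - w) := by
    intro w hw
    have hwform : ∃ r : X → ℝ, (∀ x, 0 ≤ r x ∧ r x ≤ ‖f x‖) ∧ w = fun x => ((r x : ℝ) : ℂ) := by
      rcases hw with rfl | rfl | rfl | rfl
      · exact ⟨fun x => max (f x).re 0, fun x =>
          ⟨le_max_right _ _, max_le ((le_abs_self _).trans (Complex.abs_re_le_norm _)) (norm_nonneg _)⟩, rfl⟩
      · exact ⟨fun x => max (-(f x).re) 0, fun x =>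
          ⟨le_max_right _ _, max_le ((neg_le_abs _).trans (Complex.abs_re_le_norm _)) (norm_nonneg _)⟩, rfl⟩
      · exact ⟨fun x => max (f x).im 0, fun x =>
          ⟨le_max_right _ _, max_le ((le_abs_self _).trans (Complex.abs_im_le_norm _)) (norm_nonneg _)⟩, rfl⟩
      · exact ⟨fun x => max (-(f x).im) 0, fun x =>
          ⟨le_max_right _ _, max_le ((neg_le_abs _).trans (Complex.abs_im_le_norm _)) (norm_nonneg _)⟩, rfl⟩
    obtain ⟨r, hr, rfl⟩ := hwform
    constructor
    · intro x; simp [(hr x).1]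
    · intro x
      by_cases hxU : x ∈ U
      · have : χ x = 1 := Set.indicator_of_mem hxU _
        constructor
        · simp only [Pi.sub_apply, hg, this, mul_one, Complex.sub_re, Complex.ofReal_re]
          have := (hr x).2.trans (hM x)
          linarith
        · simp [hg, this]
      · have hχ0 : χ x = 0 := Set.indicator_of_notMem hxU _
        have hr0 : r x = 0 := le_antisymm (by
          have := (hr x).2; rw [hfz x hxU] at this; simpa using this) (hr x).1
        simp [hg, hχ0, hr0]
  -- norm bound for each piece
  have hbound : ∀ᶠ h in 𝓝[>] (0:ℝ), ‖Q h f‖ ≤ 4 * M * ‖(A h).toFun U‖ := by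
    filter_upwards [aux_Ioc_mem] with h hh
    have hQg : Q h g = (M:ℂ) • (A h).toFun U := by
      rw [hgsmul, map_smul, hcorr h hh U hU.measurableSet]
    have hQgnorm : ‖Q h g‖ = M * ‖(A h).toFun U‖ := by
      rw [hQg, norm_smul, Complex.norm_real, Real.norm_of_nonneg hM0]
    have hb : ∀ w ∈ ({u₁, u₂, v₁, v₂} : Set (X → ℂ)), ‖Q h w‖ ≤ M * ‖(A h).toFun U‖ := by
      intro w hw
      obtain ⟨h1, h2⟩ := hpieces w hw
      rw [← hQgnorm]
      exact aux_norm_le hQ.1 hh h1 h2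
    have := hdecomp
    calc ‖Q h f‖ = ‖Q h u₁ - Q h u₂ + Complex.I • (Q h v₁ - Q h v₂)‖ := by
          rw [hdecomp]; simp [map_add, map_sub, map_smul]
      _ ≤ ‖Q h u₁ - Q h u₂‖ + ‖Complex.I • (Q h v₁ - Q h v₂)‖ := norm_add_le _ _
      _ ≤ (‖Q h u₁‖ + ‖Q h u₂‖) + (‖Q h v₁‖ + ‖Q h v₂‖) := by
          rw [norm_smul, Complex.norm_I, one_mul]
          gcongr <;> exact norm_sub_le _ _
      _ ≤ (M * ‖(A h).toFun U‖ + M * ‖(A h).toFun U‖)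
            + (M * ‖(A h).toFun U‖ + M * ‖(A h).toFun U‖) := by
          gcongr
          · exact hb u₁ (by simp)
          · exact hb u₂ (by simp)
          · exact hb v₁ (by simp)
          · exact hb v₂ (by simp)
      _ = 4 * M * ‖(A h).toFun U‖ := by ring
  have hlim4 : Tendsto (fun h => 4 * M * ‖(A h).toFun U‖) (𝓝[>] (0:ℝ)) (𝓝 0) := by
    simpa using hlim.const_mul (4 * M)
  exact squeeze_zero' (Eventually.of_forall fun h => norm_nonneg _) hbound hlim4

/-- The easy direction: if `F` witnesses non-membership in the support, then near any
`x ∉ F` there is an open set killed by `A`. -/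
lemma aux_easy [BorelSpace X] [LocallyCompactSpace X] [T2Space X]
    (A : ℝ → POVM X H) (Q : ℝ → (X → ℂ) →ₗ[ℂ] (H →L[ℂ] H))
    (hcorr : Corr A Q) {F : Set X} (hFc : IsClosed F)
    (hF : ∀ f ∈ B0 X, tsupport f ⊆ Fᶜ → Tendsto (fun h => ‖Q h f‖) (𝓝[>] (0:ℝ)) (𝓝 0))
    {x : X} (hx : x ∉ F) : x ∈ cospecFam A := by
  obtain ⟨K, hK, hxK, hKF⟩ := exists_compact_subset hFc.isOpen_compl hx
  set U : Set X := interior K with hUdef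
  have hUopen : IsOpen U := isOpen_interior
  have hclU : closure U ⊆ K := closure_minimal interior_subset hK.isClosed
  have hclUc : IsCompact (closure U) := hK.of_isClosed_subset isClosed_closure hclU
  set χ : X → ℂ := U.indicator (fun _ => (1:ℂ)) with hχ
  have hχS0 : χ ∈ S0 X := by
    refine ⟨1, fun _ => 1, fun _ => U, fun _ => ⟨hUopen, hclUc⟩, ?_⟩
    funext y; simp [hχ]
  have hχB0 : χ ∈ B0 X := ⟨fun _ => χ, fun _ => hχS0, fun u hu => Eventually.of_forall fun _ x => refl_mem_uniformity hu⟩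
  have hsupp : tsupport χ ⊆ Fᶜ := by
    refine subset_trans ?_ (subset_trans hclU hKF)
    refine closure_mono ?_
    intro y hy
    simp only [Function.mem_support, hχ] at hy
    by_contra hyU
    exact hy (Set.indicator_of_notMem hyU _)
  have hQχ := hF χ hχB0 hsupp
  have heq : ∀ᶠ h in 𝓝[>] (0:ℝ), ‖Q h χ‖ = ‖(A h).toFun U‖ := by
    filter_upwards [aux_Ioc_mem] with h hh
    rw [hcorr h hh U hUopen.measurableSet]
  exact ⟨U, ⟨hUopen, hQχ.congr' heq⟩, hxK⟩

/-- For the corresponding pair `{A_h}`, `{Q_h}`, the asymptotic spectrum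
`spec({A_h})` equals the asymptotic support `supp({Q_h})`. -/
theorem stmt15 [BorelSpace X] [LocallyCompactSpace X] [T2Space X]
    [TopologicalSpace.SeparableSpace H]
    (A : ℝ → POVM X H) (Q : ℝ → (X → ℂ) →ₗ[ℂ] (H →L[ℂ] H))
    (hA : ASM A) (hQ : PAM Q) (hcorr : Corr A Q) :
    specFam A = suppPAM Q := by
  ext x
  constructor
  · -- spec ⊆ supp
    intro hx
    intro F hF
    by_contra hxF
    exact hx (aux_easy A Q hcorr hF.1 hF.2 hxF)
  · -- supp ⊆ spec
    intro hx
    intro hcos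
    obtain ⟨U, ⟨hUopen, hUlim⟩, hxU⟩ := hcos
    have hmem : Uᶜ ∈ {F : Set X | IsClosed F ∧ ∀ f ∈ B0 X, tsupport f ⊆ Fᶜ →
        Tendsto (fun h => ‖Q h f‖) (𝓝[>] (0:ℝ)) (𝓝 0)} := by
      refine ⟨hUopen.isClosed_compl, fun f hf hsupp => ?_⟩
      rw [compl_compl] at hsupp
      exact aux_key A Q hQ hcorr hUopen hUlim hf hsupp
    exact (hx Uᶜ hmem) hxU
end
end

section
/- Let {A_h} be a compactly supported asymptotic spectral measure, a a measurable set, and A_h^a(b) = A_h(a ∩ b). Then lim_{h→0} ‖∫_X f dA_h^a − A_h(a) ∫_X f dA_h‖ = 0 for every f ∈ B_0(X). -/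
open Filter Topology Set

noncomputable section

variable {X H : Type*} [TopologicalSpace X] [MeasurableSpace X]
  [NormedAddCommGroup H] [InnerProductSpace ℂ H] [CompleteSpace H]

set_option linter.unusedSectionVars false

section Aux

lemma povm_add (A : POVM X H) {s t : Set X} (hs : MeasurableSet s)
    (ht : MeasurableSet t) (hd : Disjoint s t) :
    A.toFun (s ∪ t) = A.toFun s + A.toFun t := by
  classical
  set Δ : ℕ → Set X := fun n => if n = 0 then s else if n = 1 then t else ∅ with hΔ
  have hmeas : ∀ n, MeasurableSet (Δ n) := by
    intro n; simp only [hΔ]; split_ifs <;> first | exact hs | exact ht | exact MeasurableSet.empty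
  have hpw : Pairwise (Function.onFun Disjoint Δ) := by
    intro i j hij
    unfold Function.onFun
    simp only [hΔ]
    split_ifs <;> simp_all [hd, hd.symm]
  have hU : (⋃ i, Δ i) = s ∪ t := by
    apply subset_antisymm
    · refine Set.iUnion_subset fun i => ?_
      simp only [hΔ]; split_ifs <;> simp
    · rintro x (hx | hx)
      · exact Set.mem_iUnion.2 ⟨0, by simp [hΔ, hx]⟩
      · exact Set.mem_iUnion.2 ⟨1, by simp [hΔ, hx]⟩
  refine ContinuousLinearMap.ext fun x => ext_inner_right ℂ fun y => ?_
  have h1 := A.additive' Δ hmeas hpw x y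
  rw [hU] at h1
  have hev : (fun n => ∑ i ∈ Finset.range n, (inner ℂ (A.toFun (Δ i) x) y : ℂ)) =ᶠ[atTop]
      (fun _ => inner ℂ (A.toFun s x) y + inner ℂ (A.toFun t x) y) := by
    filter_upwards [eventually_ge_atTop 2] with n hn
    have hsub : ({0, 1} : Finset ℕ) ⊆ Finset.range n := by
      intro i hi; simp only [Finset.mem_insert, Finset.mem_singleton] at hi
      rcases hi with rfl | rfl <;> simp [Finset.mem_range] <;> omega
    rw [← Finset.sum_subset hsub]
    · rw [Finset.sum_pair (by norm_num)]
      simp [hΔ]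
    · intro i _ hi
      simp only [Finset.mem_insert, Finset.mem_singleton, not_or] at hi
      have : Δ i = ∅ := by simp [hΔ, hi.1, hi.2]
      simp [this, A.empty']
  have h2 := h1.congr' hev
  have h3 := tendsto_nhds_unique h2 tendsto_const_nhds
  rw [ContinuousLinearMap.add_apply, inner_add_left]
  exact h3

lemma pos_norm_le {P R : H →L[ℂ] H} (hP : P.IsPositive) (hR : R.IsPositive) :
    ‖P‖ ≤ ‖P + R‖ := by
  have h1 : (0 : H →L[ℂ] H) ≤ P := (ContinuousLinearMap.nonneg_iff_isPositive P).mpr hP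
  have h2 : P ≤ P + R := by
    rw [ContinuousLinearMap.le_def]; simpa using hR
  exact CStarAlgebra.norm_le_norm_of_nonneg_of_le h1 h2

lemma povm_norm_le_univ (A : POVM X H) {s : Set X} (hs : MeasurableSet s) :
    ‖A.toFun s‖ ≤ ‖A.toFun univ‖ := by
  have hadd : A.toFun univ = A.toFun s + A.toFun sᶜ := by
    rw [← povm_add A hs hs.compl disjoint_compl_right, Set.union_compl_self]
  rw [hadd]
  exact pos_norm_le (A.pos' s hs) (A.pos' sᶜ hs.compl)

/-- Norm bound on `Q h` via positivity. -/
lemma q_bound (A : ℝ → POVM X H) (Q : ℝ → (X → ℂ) →ₗ[ℂ] (H →L[ℂ] H))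
    (hpos : ∀ h ∈ Ioc (0:ℝ) 1, ∀ f : X → ℂ, NonnegFun f → (Q h f).IsPositive)
    (hcorr : Corr A Q) {h : ℝ} (hh : h ∈ Ioc (0:ℝ) 1) (f : X → ℂ) (M : ℝ)
    (hM : 0 ≤ M) (hf : ∀ x, ‖f x‖ ≤ M) :
    ‖Q h f‖ ≤ 4 * M * ‖(A h).toFun univ‖ := by
  have hQc : Q h ((M : ℂ) • Set.indicator univ (fun _ => (1:ℂ))) = (M : ℂ) • (A h).toFun univ := by
    rw [map_smul, hcorr h hh univ MeasurableSet.univ]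
  have key : ∀ r : X → ℝ, (∀ x, 0 ≤ r x) → (∀ x, r x ≤ M) →
      ‖Q h (fun x => (r x : ℂ))‖ ≤ M * ‖(A h).toFun univ‖ := by
    intro r hr0 hrM
    set g : X → ℂ := fun x => (r x : ℂ) with hg
    set c : X → ℂ := (M : ℂ) • Set.indicator univ (fun _ => (1:ℂ)) with hc
    have hcx : ∀ x, c x = (M : ℂ) := by
      intro x; simp [hc, Set.indicator_univ]
    have hgpos : NonnegFun g := by
      intro x; simp [hg, hr0 x]
    have hcgpos : NonnegFun (c - g) := by
      intro x
      have : (c - g) x = ((M - r x : ℝ) : ℂ) := by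
        simp [Pi.sub_apply, hcx x, hg]
      rw [this]
      constructor
      · simp [sub_nonneg, hrM x]
      · simp
    have hP := hpos h hh g hgpos
    have hR := hpos h hh (c - g) hcgpos
    have hsum : Q h g + Q h (c - g) = Q h c := by
      rw [map_sub]; abel
    have := pos_norm_le hP hR
    rw [hsum, hQc] at this
    calc ‖Q h g‖ ≤ ‖(M : ℂ) • (A h).toFun univ‖ := this
      _ = M * ‖(A h).toFun univ‖ := by
          rw [norm_smul, Complex.norm_real, Real.norm_eq_abs, abs_of_nonneg hM]
  -- decompose f into four nonnegative parts
  set g1 : X → ℂ := fun x => ((max (f x).re 0 : ℝ) : ℂ)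
  set g2 : X → ℂ := fun x => ((max (-(f x).re) 0 : ℝ) : ℂ)
  set g3 : X → ℂ := fun x => ((max (f x).im 0 : ℝ) : ℂ)
  set g4 : X → ℂ := fun x => ((max (-(f x).im) 0 : ℝ) : ℂ)
  have hdecomp : f = g1 - g2 + Complex.I • (g3 - g4) := by
    funext x
    simp only [Pi.add_apply, Pi.sub_apply, Pi.smul_apply, smul_eq_mul, g1, g2, g3, g4]
    apply Complex.ext <;> simp [max_zero_sub_max_neg_zero_eq_self]
  have hb : ∀ x, max (f x).re 0 ≤ M ∧ max (-(f x).re) 0 ≤ M ∧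
      max (f x).im 0 ≤ M ∧ max (-(f x).im) 0 ≤ M := by
    intro x
    have h1 : |(f x).re| ≤ ‖f x‖ := by
      exact Complex.abs_re_le_norm _
    have h2 : |(f x).im| ≤ ‖f x‖ := by
      exact Complex.abs_im_le_norm _
    have h3 := hf x
    refine ⟨max_le (by linarith [(abs_le.mp (h1.trans h3)).2]) hM,
      max_le (by linarith [(abs_le.mp (h1.trans h3)).1]) hM,
      max_le (by linarith [(abs_le.mp (h2.trans h3)).2]) hM,
      max_le (by linarith [(abs_le.mp (h2.trans h3)).1]) hM⟩
  have k1 := key _ (fun x => le_max_right _ _) (fun x => (hb x).1)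
  have k2 := key _ (fun x => le_max_right _ _) (fun x => (hb x).2.1)
  have k3 := key _ (fun x => le_max_right _ _) (fun x => (hb x).2.2.1)
  have k4 := key _ (fun x => le_max_right _ _) (fun x => (hb x).2.2.2)
  have hQf : Q h f = Q h g1 - Q h g2 + Complex.I • (Q h g3 - Q h g4) := by
    rw [hdecomp, map_add, map_sub, map_smul, map_sub]
  rw [hQf]
  have : ‖Q h g1 - Q h g2 + Complex.I • (Q h g3 - Q h g4)‖ ≤
      ‖Q h g1‖ + ‖Q h g2‖ + (‖Q h g3‖ + ‖Q h g4‖) := by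
    refine le_trans (norm_add_le _ _) ?_
    gcongr
    · exact norm_sub_le _ _
    · rw [norm_smul, Complex.norm_I, one_mul]
      exact norm_sub_le _ _
  refine le_trans this ?_
  have : (4:ℝ) * M * ‖(A h).toFun univ‖ = M * ‖(A h).toFun univ‖ + M * ‖(A h).toFun univ‖
      + (M * ‖(A h).toFun univ‖ + M * ‖(A h).toFun univ‖) := by ring
  rw [this]
  gcongr

end Aux

/-- For a compactly supported asymptotic spectral measure `{A_h}` with
corresponding positive asymptotic morphism `{Q_h}` and `A_h^a(b) = A_h(a ∩ b)`, one has
`lim_{h→0}‖∫ f dA_h^a − A_h(a) ∫ f dA_h‖ = 0` for every `f ∈ B_0(X)`, where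
`∫ f dA_h^a = Q_h(χ_a f)` and `∫ f dA_h = Q_h(f)`. -/
theorem stmt17 [BorelSpace X] [LocallyCompactSpace X] [T2Space X]
    [TopologicalSpace.SeparableSpace H]
    (A : ℝ → POVM X H) (Q : ℝ → (X → ℂ) →ₗ[ℂ] (H →L[ℂ] H))
    (hA : ASM A) (hAc : HasCompactSupportASM A) (hQ : PAM Q) (hcorr : Corr A Q)
    (a : Set X) (ha : MeasurableSet a) :
    ∀ f ∈ B0 X,
      Tendsto (fun h => ‖Q h (a.indicator (fun _ => (1:ℂ)) * f) -
          (A h).toFun a * Q h f‖) (𝓝[>] (0:ℝ)) (𝓝 0) := by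
  intro f hf
  classical
  obtain ⟨hA1, hA2, hA3⟩ := hA
  obtain ⟨hQ1, hQ2, hQ3⟩ := hQ
  -- eventual bound on ‖A h univ‖
  have hTuniv := hA3 univ univ MeasurableSet.univ MeasurableSet.univ
  rw [Set.univ_inter] at hTuniv
  have hbdd : ∀ᶠ h in 𝓝[>] (0:ℝ), ‖(A h).toFun univ‖ ≤ 2 := by
    filter_upwards [hTuniv.eventually_lt_const one_pos] with h hh
    set T := (A h).toFun univ with hT
    have hsa : IsSelfAdjoint T := ((A h).pos' univ MeasurableSet.univ).isSelfAdjoint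
    have hmul : ‖T * T‖ = ‖T‖ * ‖T‖ := by
      have := ContinuousLinearMap.norm_adjoint_comp_self T
      rwa [hsa.adjoint_eq, ← ContinuousLinearMap.mul_def] at this
    have h1 : ‖T * T‖ ≤ ‖T - T * T‖ + ‖T‖ := by
      have e : T * T = -(T - T * T) + T := by abel
      calc ‖T * T‖ = ‖-(T - T * T) + T‖ := by rw [← e]
        _ ≤ ‖-(T - T * T)‖ + ‖T‖ := norm_add_le _ _
        _ = ‖T - T * T‖ + ‖T‖ := by rw [norm_neg]
    nlinarith [norm_nonneg T, hmul, hh.le]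
  have hmem : ∀ᶠ h in 𝓝[>] (0:ℝ), h ∈ Ioc (0:ℝ) 1 := by
    filter_upwards [Ioo_mem_nhdsGT_of_mem (Set.mem_Ico.mpr ⟨le_refl (0:ℝ), zero_lt_one⟩)]
      with h hh
    exact ⟨hh.1, hh.2.le⟩
  -- middle term: for simple functions
  have hmid : ∀ g ∈ S0 X,
      Tendsto (fun h => ‖Q h (a.indicator (fun _ => (1:ℂ)) * g) -
        (A h).toFun a * Q h g‖) (𝓝[>] (0:ℝ)) (𝓝 0) := by
    rintro g ⟨n, c, U, hU, rfl⟩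
    have hUm : ∀ i, MeasurableSet (U i) := fun i => (hU i).1.measurableSet
    have hfun : a.indicator (fun _ => (1:ℂ)) * (fun x => ∑ i, c i * (U i).indicator (fun _ => (1:ℂ)) x)
        = ∑ i, c i • (a ∩ U i).indicator (fun _ => (1:ℂ)) := by
      funext x
      simp only [Pi.mul_apply, Finset.sum_apply, Pi.smul_apply, smul_eq_mul, Finset.mul_sum]
      refine Finset.sum_congr rfl fun i _ => ?_
      by_cases hxa : x ∈ a <;> by_cases hxU : x ∈ U i <;>
        simp [Set.indicator_apply, hxa, hxU, Set.mem_inter_iff]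
    have hfun2 : (fun x => ∑ i, c i * (U i).indicator (fun _ => (1:ℂ)) x)
        = ∑ i, c i • (U i).indicator (fun _ => (1:ℂ)) := by
      funext x
      simp [Finset.sum_apply]
    apply squeeze_zero'
    · exact Eventually.of_forall fun h => norm_nonneg _
    · show ∀ᶠ h in 𝓝[>] (0:ℝ), _ ≤
        ∑ i, ‖c i‖ * ‖(A h).toFun (a ∩ U i) - (A h).toFun a * (A h).toFun (U i)‖
      filter_upwards [hmem] with h hh
      have e1 : Q h (a.indicator (fun _ => (1:ℂ)) *
          (fun x => ∑ i, c i * (U i).indicator (fun _ => (1:ℂ)) x)) =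
          ∑ i, c i • (A h).toFun (a ∩ U i) := by
        rw [hfun, map_sum]
        refine Finset.sum_congr rfl fun i _ => ?_
        rw [map_smul, hcorr h hh _ (ha.inter (hUm i))]
      have e2 : (A h).toFun a * Q h (fun x => ∑ i, c i * (U i).indicator (fun _ => (1:ℂ)) x) =
          ∑ i, c i • ((A h).toFun a * (A h).toFun (U i)) := by
        rw [hfun2, map_sum, Finset.mul_sum]
        refine Finset.sum_congr rfl fun i _ => ?_
        rw [map_smul, hcorr h hh _ (hUm i), mul_smul_comm]
      rw [e1, e2, ← Finset.sum_sub_distrib]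
      refine le_trans (norm_sum_le _ _) (le_of_eq (Finset.sum_congr rfl fun i _ => ?_))
      rw [← smul_sub, norm_smul]
    · have : Tendsto (fun h => ∑ i : Fin n, ‖c i‖ *
          ‖(A h).toFun (a ∩ U i) - (A h).toFun a * (A h).toFun (U i)‖) (𝓝[>] (0:ℝ))
          (𝓝 (∑ _i : Fin n, (0:ℝ))) :=
        tendsto_finset_sum _ fun i _ => by
          simpa using tendsto_const_nhds.mul (hA3 a (U i) ha (hUm i))
      simpa using this
  -- main epsilon argument
  obtain ⟨g, hgS0, hgconv⟩ := hf
  rw [Metric.tendsto_nhds]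
  intro ε hε
  set δ : ℝ := ε / 48 with hδ
  have hδpos : 0 < δ := by positivity
  rw [Metric.tendstoUniformly_iff] at hgconv
  obtain ⟨n, hn⟩ := (hgconv δ hδpos).exists
  set G : X → ℂ := g n with hG
  have hGb : ∀ x, ‖f x - G x‖ ≤ δ := by
    intro x
    have := hn x
    rw [dist_eq_norm] at this
    exact this.le
  have hGS0 : G ∈ S0 X := hgS0 n
  have hmidG := hmid G hGS0
  filter_upwards [hmem, hbdd, hmidG.eventually_lt_const (by positivity : (0:ℝ) < ε/2)]
    with h hh hA2h hmidh
  rw [Real.dist_eq, sub_zero, abs_of_nonneg (norm_nonneg _)]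
  -- decompose
  have hsplit : Q h (a.indicator (fun _ => (1:ℂ)) * f) - (A h).toFun a * Q h f =
      (Q h (a.indicator (fun _ => (1:ℂ)) * G) - (A h).toFun a * Q h G) +
      Q h (a.indicator (fun _ => (1:ℂ)) * (f - G)) - (A h).toFun a * Q h (f - G) := by
    have hfG : a.indicator (fun _ => (1:ℂ)) * f =
        a.indicator (fun _ => (1:ℂ)) * G + a.indicator (fun _ => (1:ℂ)) * (f - G) := by
      ring
    rw [hfG, map_add]
    have e : Q h (f - G) = Q h f - Q h G := map_sub _ _ _
    rw [e, mul_sub ((A h).toFun a) (Q h f) (Q h G)]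
    abel
  rw [hsplit]
  have hb1 : ‖Q h (a.indicator (fun _ => (1:ℂ)) * (f - G))‖ ≤ 4 * δ * 2 := by
    have := q_bound A Q hQ1 hcorr hh (a.indicator (fun _ => (1:ℂ)) * (f - G)) δ hδpos.le ?_
    · calc ‖Q h (a.indicator (fun _ => (1:ℂ)) * (f - G))‖ ≤ 4 * δ * ‖(A h).toFun univ‖ := this
        _ ≤ 4 * δ * 2 := by gcongr
    · intro x
      by_cases hxa : x ∈ a <;>
        simp only [Pi.mul_apply, Pi.sub_apply, Set.indicator_apply, hxa, if_pos, if_neg,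
          ite_true, ite_false, one_mul, zero_mul, norm_zero]
      · exact hGb x
      · exact hδpos.le
  have hb2 : ‖(A h).toFun a * Q h (f - G)‖ ≤ 2 * (4 * δ * 2) := by
    have hQfG : ‖Q h (f - G)‖ ≤ 4 * δ * 2 := by
      have := q_bound A Q hQ1 hcorr hh (f - G) δ hδpos.le hGb
      calc ‖Q h (f - G)‖ ≤ 4 * δ * ‖(A h).toFun univ‖ := this
        _ ≤ 4 * δ * 2 := by gcongr
    have hAa : ‖(A h).toFun a‖ ≤ 2 := le_trans (povm_norm_le_univ (A h) ha) hA2h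
    calc ‖(A h).toFun a * Q h (f - G)‖ ≤ ‖(A h).toFun a‖ * ‖Q h (f - G)‖ := norm_mul_le _ _
      _ ≤ 2 * (4 * δ * 2) := by
          apply mul_le_mul hAa hQfG (norm_nonneg _) (by norm_num)
  set W1 := Q h (a.indicator (fun _ => (1:ℂ)) * G) - (A h).toFun a * Q h G with hW1
  set W2 := Q h (a.indicator (fun _ => (1:ℂ)) * (f - G)) with hW2
  set W3 := (A h).toFun a * Q h (f - G) with hW3
  have hn1 : ‖W1 + W2 - W3‖ ≤ ‖W1‖ + ‖W2‖ + ‖W3‖ :=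
    (norm_sub_le _ _).trans (by gcongr; exact norm_add_le _ _)
  have hm : ‖W1‖ < ε / 2 := hmidh
  linarith [hb1, hb2]
end
end
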